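/- Let m ≥ 1 and let c be a function from partitions of m to the natural numbers, not identically zero. For each composition α of m set d_α = Σ_{λ ⊢ m} c(λ) · #{T ∈ SYT(λ) : DesComp(T) = α}, and let α* be the lexicographically largest composition of m with d_{α*} ≠ 0. Then α* is a partition, d_{α*} = c(α*), and d_β ≥ c(α*) · #{T ∈ SYT(α*) : DesComp(T) = β} for every composition β of m. -/

import Mathlib

open scoped Classical

namespace QC

/-- A filling assigns a natural-number entry to each cell `(i, j)`;
entries are `0` outside the shape. Values are 1-based. -/
abbrev Filling : Type := ℕ → ℕ → ℕ

/-- The cell `(i, j)` (row `i`, column `j`, both 0-based) lies in the Young diagram of `lam`. -/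
def InShape (lam : List ℕ) (i j : ℕ) : Prop :=
  i < lam.length ∧ j < lam.getD i 0

/-- The finite set of cells of the Young diagram of `lam`. -/
def cells (lam : List ℕ) : Finset (ℕ × ℕ) :=
  (Finset.range lam.length).biUnion fun i =>
    ({i} : Finset ℕ) ×ˢ Finset.range (lam.getD i 0)

/-- `lam` is a partition of `m`: weakly decreasing, positive parts, summing to `m`. -/
def IsPartitionOf (m : ℕ) (lam : List ℕ) : Prop :=
  lam.Pairwise (· ≥ ·) ∧ (∀ x ∈ lam, 0 < x) ∧ lam.sum = m

/-- `a` is a composition of `m`: positive parts summing to `m`. -/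
def IsCompositionOf (m : ℕ) (a : List ℕ) : Prop :=
  (∀ x ∈ a, 0 < x) ∧ a.sum = m

/-- `T` is a semistandard Young tableau of shape `lam`: positive entries on the shape,
zero off the shape, rows weakly increasing, columns strictly increasing. -/
def IsSSYT (lam : List ℕ) (T : Filling) : Prop :=
  (∀ i j, ¬ InShape lam i j → T i j = 0) ∧
  (∀ i j, InShape lam i j → 0 < T i j) ∧
  (∀ i j1 j2, j1 ≤ j2 → InShape lam i j2 → T i j1 ≤ T i j2) ∧
  (∀ i1 i2 j, i1 < i2 → InShape lam i2 j → T i1 j < T i2 j)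

/-- All entries of `T` are at most `n`. -/
def EntriesLE (n : ℕ) (T : Filling) : Prop := ∀ i j, T i j ≤ n

/-- `T` is a standard Young tableau of shape `lam ⊢ m`: a semistandard tableau in which
each of `1, …, m` appears exactly once. -/
def IsSYT (lam : List ℕ) (m : ℕ) (T : Filling) : Prop :=
  IsSSYT lam T ∧ EntriesLE m T ∧
    ∀ k, 1 ≤ k → k ≤ m → ∃! c : ℕ × ℕ, InShape lam c.1 c.2 ∧ T c.1 c.2 = k

/-- `k` is a descent of the standard tableau `T`: `k + 1` lies in a strictly lower row. -/
def IsDescent (lam : List ℕ) (T : Filling) (k : ℕ) : Prop :=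
  ∃ i1 j1 i2 j2, InShape lam i1 j1 ∧ InShape lam i2 j2 ∧
    T i1 j1 = k ∧ T i2 j2 = k + 1 ∧ i1 < i2

/-- The sorted list of descents of `T`, a standard tableau with `m` cells. -/
noncomputable def descentList (lam : List ℕ) (m : ℕ) (T : Filling) : List ℕ :=
  ((Finset.Ico 1 m).filter fun k => IsDescent lam T k).sort (· ≤ ·)

/-- The number of descents of `T`. -/
noncomputable def numDescents (lam : List ℕ) (m : ℕ) (T : Filling) : ℕ :=
  ((Finset.Ico 1 m).filter fun k => IsDescent lam T k).card

/-- The descent composition `(d₁, d₂ - d₁, …, m - d_{s-1})` of a standard tableau. -/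
noncomputable def desComp (lam : List ℕ) (m : ℕ) (T : Filling) : List ℕ :=
  if m = 0 then [] else
    List.zipWith (· - ·) (descentList lam m T ++ [m]) (0 :: descentList lam m T)

/-- The number of cells of `T` carrying the entry `v`. -/
def countEq (lam : List ℕ) (T : Filling) (v : ℕ) : ℕ :=
  ((cells lam).filter fun c => T c.1 c.2 = v).card

/-- The weight of `T` as a list `(γ₁, …, γₙ)`, `γᵢ` the number of entries equal to `i`. -/
def wt (lam : List ℕ) (n : ℕ) (T : Filling) : List ℕ :=
  (List.range n).map fun v => countEq lam T (v + 1)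

/-- The standardization of `T`: cells are relabelled `1, …, m` in order of increasing entry,
breaking ties between equal entries by increasing column index. -/
noncomputable def stdize (lam : List ℕ) (T : Filling) : Filling := fun i j =>
  if InShape lam i j then
    ((cells lam).filter fun c =>
      T c.1 c.2 < T i j ∨ (T c.1 c.2 = T i j ∧ c.2 ≤ j)).card
  else 0

/-- Given a weak composition `g`, `destValue g k` is the unique `i` with
`g₁ + ⋯ + g_{i-1} < k ≤ g₁ + ⋯ + g_i` (and `0` for `k = 0`). -/
def destValue (g : List ℕ) (k : ℕ) : ℕ :=
  ((List.range g.length).filter fun i => (g.take i).sum < k).length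

/-- The destandardization `D_g(T₀)`: each entry `j` of `T₀` is replaced by the unique `i`
with `g₁ + ⋯ + g_{i-1} < j ≤ g₁ + ⋯ + g_i`. -/
def Dmap (g : List ℕ) (T : Filling) : Filling := fun i j => destValue g (T i j)

/-- `Refines a b`: the composition `b` refines `a`, i.e. `b` can be cut into consecutive
blocks whose sums are the parts of `a` in order. -/
def Refines (a b : List ℕ) : Prop :=
  ∃ L : List (List ℕ), L.flatten = b ∧ L.map List.sum = a

/-- Strict lexicographic order on integer sequences. -/
def lexLt (a b : List ℕ) : Prop := List.Lex (· < ·) a b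

/-- Weak lexicographic order on integer sequences. -/
def lexLe (a b : List ℕ) : Prop := a = b ∨ lexLt a b

/-- The largest entry of `T`. -/
def maxEntry (lam : List ℕ) (T : Filling) : ℕ :=
  (cells lam).sup fun c => T c.1 c.2

/-- The weight of `T` (over all values), with zero parts deleted. -/
def wtFull (lam : List ℕ) (T : Filling) : List ℕ :=
  ((List.range (maxEntry lam T)).map fun v => countEq lam T (v + 1)).filter (· ≠ 0)

/-- The proper partial sums `α₁, α₁ + α₂, …, α₁ + ⋯ + α_{s-1}` of a composition. -/
def innerSums (a : List ℕ) : List ℕ :=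
  (List.range a.length).tail.map fun t => (a.take t).sum

/-- `f : Fin m → Fin n` encodes a sequence `1 ≤ i₁ ≤ i₂ ≤ … ≤ i_m ≤ n` (via `i_t = f (t-1) + 1`)
which ascends strictly, `i_j < i_{j+1}`, at every proper partial sum `j` of `a`. -/
def IsFWord (m n : ℕ) (a : List ℕ) (f : Fin m → Fin n) : Prop :=
  Monotone f ∧
    ∀ (t : ℕ) (ht : t + 1 < m), (t + 1) ∈ innerSums a →
      f ⟨t, Nat.lt_of_succ_lt ht⟩ < f ⟨t + 1, ht⟩

/-- The fundamental quasisymmetric polynomial `F_a(x₁, …, xₙ)` of degree `m`. -/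
noncomputable def Fpoly (m n : ℕ) (a : List ℕ) : MvPolynomial (Fin n) ℤ :=
  ∑ f ∈ Finset.univ.filter (fun f : Fin m → Fin n => IsFWord m n a f),
    ∏ t : Fin m, MvPolynomial.X (f t)

/-- The monomial `x₁^{γ₁} ⋯ xₙ^{γₙ}` of a tableau `T` of weight `γ`. -/
noncomputable def wtMonomial (lam : List ℕ) (n : ℕ) (T : Filling) :
    MvPolynomial (Fin n) ℤ :=
  ∏ i : Fin n, MvPolynomial.X i ^ countEq lam T (i.val + 1)

/-- `Rot` of a word `w` of length `k` on `{1, …, n}`: the `j`-th letter of `rot k n w`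
is `n + 1 - w_{k+1-j}` (1-based), here written 0-based. -/
def rot (k n : ℕ) (w : Fin k → ℕ) : Fin k → ℕ := fun j =>
  n + 1 - w ⟨k - 1 - j.val, by have := j.isLt; omega⟩

/-- The descent set of a word `w = w₁ ⋯ w_k`: positions `i ∈ {1, …, k-1}` with `wᵢ > w_{i+1}`
(1-based positions; `w ⟨i-1,_⟩` is `wᵢ`). -/
noncomputable def wordDes (k : ℕ) (w : Fin k → ℕ) : Finset ℕ :=
  (Finset.Ico 1 k).filter fun i =>
    ∃ (h1 : i - 1 < k) (h2 : i < k), w ⟨i, h2⟩ < w ⟨i - 1, h1⟩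

/-- The descent composition of a word of length `k`. -/
noncomputable def wordDesComp (k : ℕ) (w : Fin k → ℕ) : List ℕ :=
  if k = 0 then []
  else
    List.zipWith (· - ·) ((wordDes k w).sort (· ≤ ·) ++ [k])
      (0 :: (wordDes k w).sort (· ≤ ·))

/-! ### Auxiliary development -/

/-- `gapsFrom m prev D` is the list of gaps of `prev :: D ++ [m]`. -/
def gapsFrom (m : ℕ) : ℕ → List ℕ → List ℕ
  | prev, [] => [m - prev]
  | prev, x :: D => (x - prev) :: gapsFrom m x D

/-- partial sums of `lam`. -/
def ps (lam : List ℕ) (k : ℕ) : ℕ := (lam.take k).sum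

/-- the list `[ps 1, …, ps k]`. -/
def psList (lam : List ℕ) (k : ℕ) : List ℕ :=
  (List.range k).map fun t => ps lam (t + 1)

/-- the row-superstandard tableau. -/
noncomputable def superT (lam : List ℕ) : Filling := fun i j =>
  if InShape lam i j then ps lam i + j + 1 else 0

lemma zipWith_gapsFrom (m : ℕ) : ∀ (D : List ℕ) (prev : ℕ),
    List.zipWith (· - ·) (D ++ [m]) (prev :: D) = gapsFrom m prev D := by
  intro D
  induction D with
  | nil => intro prev; simp [gapsFrom]
  | cons x D ih => intro prev; simp [gapsFrom, ih x]

lemma desComp_eq_gapsFrom (lam : List ℕ) (m : ℕ) (T : Filling) (hm : m ≠ 0) :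
    desComp lam m T = gapsFrom m 0 (descentList lam m T) := by
  rw [desComp, if_neg hm, zipWith_gapsFrom]

lemma gapsFrom_sum_pos (m : ℕ) : ∀ (D : List ℕ) (prev : ℕ),
    List.Chain' (· < ·) (prev :: (D ++ [m])) →
    (gapsFrom m prev D).sum + prev = m ∧ ∀ x ∈ gapsFrom m prev D, 0 < x := by
  intro D
  induction D with
  | nil =>
    intro prev h
    simp only [List.Chain', List.nil_append, List.isChain_cons_cons, List.isChain_singleton, and_true] at h
    simp [gapsFrom]; omega
  | cons x D ih =>
    intro prev h
    simp only [List.Chain', List.cons_append, List.isChain_cons_cons] at h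
    obtain ⟨hpx, h2⟩ := h
    obtain ⟨hsum, hpos⟩ := ih x h2
    constructor
    · simp [gapsFrom]; omega
    · intro y hy
      simp only [gapsFrom, List.mem_cons] at hy
      rcases hy with rfl | hy
      · omega
      · exact hpos y hy

lemma descentList_chain (lam : List ℕ) (m : ℕ) (T : Filling) (hm : 1 ≤ m) :
    List.Chain' (· < ·) (0 :: (descentList lam m T ++ [m])) := by
  rw [List.Chain', List.isChain_iff_pairwise]
  have hs : (descentList lam m T).Pairwise (· < ·) := (Finset.sortedLT_sort _).pairwise
  have hmem : ∀ x ∈ descentList lam m T, 1 ≤ x ∧ x < m := by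
    intro x hx
    rw [descentList, Finset.mem_sort, Finset.mem_filter, Finset.mem_Ico] at hx
    exact ⟨hx.1.1, hx.1.2⟩
  constructor
  · intro y hy
    rcases List.mem_append.1 hy with hy | hy
    · exact lt_of_lt_of_le Nat.zero_lt_one (hmem y hy).1
    · simp at hy; omega
  · rw [List.pairwise_append]
    refine ⟨hs, by simp, ?_⟩
    intro x hx y hy
    simp at hy; subst hy
    exact (hmem x hx).2

lemma desComp_isComposition (lam : List ℕ) (m : ℕ) (T : Filling) (hm : 1 ≤ m) :
    IsCompositionOf m (desComp lam m T) := by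
  rw [desComp_eq_gapsFrom lam m T (by omega)]
  obtain ⟨h1, h2⟩ := gapsFrom_sum_pos m (descentList lam m T) 0
    (descentList_chain lam m T hm)
  exact ⟨h2, by omega⟩

section PS
variable {m : ℕ} {lam : List ℕ} (hlam : IsPartitionOf m lam)

lemma ps_zero : ps lam 0 = 0 := rfl

lemma ps_succ {k : ℕ} (hk : k < lam.length) :
    ps lam (k + 1) = ps lam k + lam.getD k 0 := by
  rw [ps, ps, List.take_succ, List.sum_append]
  congr 1
  rw [List.getElem?_eq_getElem hk, List.getD_eq_getElem lam 0 hk]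
  simp

include hlam

lemma ps_length : ps lam lam.length = m := by
  rw [ps, List.take_length, hlam.2.2]

lemma lam_pos {i : ℕ} (hi : i < lam.length) : 0 < lam.getD i 0 := by
  rw [List.getD_eq_getElem lam 0 hi]
  exact hlam.2.1 _ (List.getElem_mem hi)

lemma ps_lt_succ {k : ℕ} (hk : k < lam.length) : ps lam k < ps lam (k + 1) := by
  rw [ps_succ hk]
  have := lam_pos hlam hk
  omega

lemma ps_mono : Monotone (ps lam) := by
  apply monotone_nat_of_le_succ
  intro k
  rcases lt_or_ge k lam.length with hk | hk
  · exact (ps_lt_succ hlam hk).le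
  · unfold ps
    rw [List.take_of_length_le hk, List.take_of_length_le (by omega)]

lemma ps_strictMonoOn {a b : ℕ} (hab : a < b) (hb : b ≤ lam.length) :
    ps lam a < ps lam b :=
  lt_of_lt_of_le (ps_lt_succ hlam (by omega)) (ps_mono hlam (by omega))

lemma ps_le_m (k : ℕ) : ps lam k ≤ m := by
  rcases le_or_gt k lam.length with h | h
  · rw [← ps_length hlam]; exact ps_mono hlam h
  · rw [ps, List.take_of_length_le h.le, hlam.2.2]

lemma ps_lt_m {k : ℕ} (hk : k < lam.length) : ps lam k < m := by
  rw [← ps_length hlam]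
  exact ps_strictMonoOn hlam hk le_rfl

lemma lam_length_pos (hm : 1 ≤ m) : 0 < lam.length := by
  rcases Nat.eq_zero_or_pos lam.length with h | h
  · exfalso
    have := hlam.2.2
    rw [List.length_eq_zero_iff] at h
    subst h; simp at this; omega
  · exact h

end PS

lemma psList_zero (lam : List ℕ) : psList lam 0 = [] := rfl

lemma psList_succ (lam : List ℕ) (k : ℕ) :
    psList lam (k + 1) = psList lam k ++ [ps lam (k + 1)] := by
  rw [psList, List.range_succ, List.map_append, psList]
  rfl

lemma mem_psList {lam : List ℕ} {k x : ℕ} :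
    x ∈ psList lam k ↔ ∃ t, t < k ∧ x = ps lam (t + 1) := by
  simp only [psList, List.mem_map, List.mem_range]
  constructor
  · rintro ⟨t, ht, rfl⟩; exact ⟨t, ht, rfl⟩
  · rintro ⟨t, ht, rfl⟩; exact ⟨t, ht, rfl⟩

lemma psList_sorted {m : ℕ} {lam : List ℕ} (hlam : IsPartitionOf m lam) {k : ℕ}
    (hk : k ≤ lam.length) : (psList lam k).Pairwise (· < ·) := by
  rw [psList, List.pairwise_iff_getElem]
  intro a b ha hb hab
  simp only [List.length_map, List.length_range] at ha hb
  simp only [List.getElem_map, List.getElem_range]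
  exact ps_strictMonoOn hlam (by omega) (by omega)

lemma take_succ_getD {lam : List ℕ} {k : ℕ} (hk : k < lam.length) :
    lam.take (k + 1) = lam.take k ++ [lam.getD k 0] := by
  rw [List.take_succ, List.getElem?_eq_getElem hk, List.getD_eq_getElem lam 0 hk]
  rfl

lemma GF_split {m : ℕ} {lam : List ℕ} (hlam : IsPartitionOf m lam) :
    ∀ k, k ≤ lam.length → ∀ B : List ℕ,
    gapsFrom m 0 (psList lam k ++ B) = lam.take k ++ gapsFrom m (ps lam k) B := by
  intro k
  induction k with
  | zero => intro _ B; simp [psList_zero, ps_zero]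
  | succ k ih =>
    intro hk B
    rw [psList_succ, List.append_assoc, List.cons_append, List.nil_append,
      ih (by omega) (ps lam (k+1) :: B)]
    have : gapsFrom m (ps lam k) (ps lam (k+1) :: B)
        = (ps lam (k+1) - ps lam k) :: gapsFrom m (ps lam (k+1)) B := rfl
    rw [this, take_succ_getD (by omega : k < lam.length)]
    have h2 : ps lam (k+1) - ps lam k = lam.getD k 0 := by
      rw [ps_succ (by omega : k < lam.length)]; omega
    rw [h2, List.append_assoc, List.cons_append, List.nil_append]

lemma sorted_lt_nodup {l : List ℕ} (h : l.Pairwise (· < ·)) : l.Nodup :=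
  h.imp ne_of_lt

lemma sort_split (S : Finset ℕ) (l : List ℕ) (bound : ℕ)
    (hl : l.Pairwise (· < ·))
    (h1 : ∀ x ∈ S, x ≤ bound → x ∈ l)
    (h2 : ∀ x ∈ l, x ∈ S ∧ x ≤ bound) :
    ∃ B, S.sort (· ≤ ·) = l ++ B ∧ ∀ x ∈ B, bound < x := by
  classical
  set D := S.sort (· ≤ ·) with hD
  set p : ℕ → Bool := fun x => decide (x ≤ bound) with hp
  refine ⟨D.filter (fun x => ! p x), ?_, ?_⟩
  · have hDnodup : D.Nodup := Finset.sort_nodup _ _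
    have hDsorted : D.Pairwise (· ≤ ·) := Finset.pairwise_sort _ _
    have hfl : D.filter p = l := by
      refine List.Perm.eq_of_pairwise' (r := (· ≤ ·)) ?_ ?_ ?_; rotate_right
      · rw [List.perm_ext_iff_of_nodup (hDnodup.filter _) (sorted_lt_nodup hl)]
        intro x
        rw [List.mem_filter]
        constructor
        · rintro ⟨hx, hx2⟩
          exact h1 x (by rwa [hD, Finset.mem_sort] at hx) (by simpa [hp] using hx2)
        · intro hx
          obtain ⟨hxS, hxb⟩ := h2 x hx
          exact ⟨by rwa [hD, Finset.mem_sort], by simpa [hp]⟩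
      · exact hDsorted.filter _
      · exact hl.imp le_of_lt
    conv_rhs => rw [← hfl]
    refine List.Perm.eq_of_pairwise' (r := (· ≤ ·)) ?_ ?_ ?_; rotate_right
    · exact (List.filter_append_perm p D).symm
    · exact hDsorted
    · rw [List.pairwise_append]
      refine ⟨hDsorted.filter _, hDsorted.filter _, ?_⟩
      intro x hx y hy
      rw [List.mem_filter] at hx hy
      have hx2 : x ≤ bound := by simpa [hp] using hx.2
      have hy2 : ¬ y ≤ bound := by simpa [hp] using hy.2
      omega
  · intro x hx
    rw [List.mem_filter] at hx
    have := hx.2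
    simp [hp] at this
    omega

/-- rows `0, …, k-1` are filled consecutively. -/
def RowsFilled (lam : List ℕ) (T : Filling) (k : ℕ) : Prop :=
  ∀ i, i < k → ∀ j, j < lam.getD i 0 → T i j = ps lam i + j + 1

section SYT
variable {m : ℕ} {lam : List ℕ} {T : Filling}

lemma getD_anti {m : ℕ} (hlam : IsPartitionOf m lam) {i i' : ℕ} (h : i' ≤ i)
    (hi : i < lam.length) : lam.getD i 0 ≤ lam.getD i' 0 := by
  rcases eq_or_lt_of_le h with rfl | h'
  · exact le_rfl
  · rw [List.getD_eq_getElem lam 0 hi, List.getD_eq_getElem lam 0 (by omega)]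
    have := hlam.1.rel_get_of_lt (a := ⟨i', by omega⟩) (b := ⟨i, hi⟩) h'
    simpa using this

lemma shape_mono (hlam : IsPartitionOf m lam) {i j i' j' : ℕ}
    (h : InShape lam i j) (hi : i' ≤ i) (hj : j' ≤ j) : InShape lam i' j' := by
  obtain ⟨h1, h2⟩ := h
  exact ⟨by omega, lt_of_le_of_lt hj (lt_of_lt_of_le h2 (getD_anti hlam hi h1))⟩

lemma cellUnique (hT : IsSYT lam m T) {i1 j1 i2 j2 : ℕ}
    (h1 : InShape lam i1 j1) (h2 : InShape lam i2 j2)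
    (he : T i1 j1 = T i2 j2) : i1 = i2 ∧ j1 = j2 := by
  have hpos : 0 < T i1 j1 := hT.1.2.1 _ _ h1
  have hle : T i1 j1 ≤ m := hT.2.1 i1 j1
  obtain ⟨c, -, hcu⟩ := hT.2.2 (T i1 j1) hpos hle
  have e1 := hcu (i1, j1) ⟨h1, rfl⟩
  have e2 := hcu (i2, j2) ⟨h2, he.symm⟩
  rw [← e2] at e1
  exact ⟨congrArg Prod.fst e1, congrArg Prod.snd e1⟩

lemma row_strict (hlam : IsPartitionOf m lam) (hT : IsSYT lam m T) {i j1 j2 : ℕ}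
    (hj : j1 < j2) (h2 : InShape lam i j2) : T i j1 < T i j2 := by
  have hle := hT.1.2.2.1 i j1 j2 hj.le h2
  rcases lt_or_eq_of_le hle with h | h
  · exact h
  · exact absurd ((cellUnique hT (shape_mono hlam h2 le_rfl hj.le) h2 h).2) (by omega)

lemma exists_block (hlam : IsPartitionOf m lam) :
    ∀ k, k ≤ lam.length → ∀ v, 1 ≤ v → v ≤ ps lam k →
    ∃ a, a < k ∧ ps lam a < v ∧ v ≤ ps lam (a + 1) := by
  intro k
  induction k with
  | zero => intro _ v hv hv2; rw [ps_zero] at hv2; omega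
  | succ k ih =>
    intro hk v hv hv2
    rcases le_or_gt v (ps lam k) with h | h
    · obtain ⟨a, ha, h1, h2⟩ := ih (by omega) v hv h
      exact ⟨a, by omega, h1, h2⟩
    · exact ⟨k, by omega, h, hv2⟩

lemma filled_cell (hlam : IsPartitionOf m lam) {k : ℕ} (hRF : RowsFilled lam T k)
    (hk : k ≤ lam.length) {v : ℕ} (hv1 : 1 ≤ v) (hv2 : v ≤ ps lam k) :
    ∃ a j, a < k ∧ InShape lam a j ∧ T a j = v := by
  obtain ⟨a, ha, h1, h2⟩ := exists_block hlam k hk v hv1 hv2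
  have ha2 : a < lam.length := by omega
  have hps := ps_succ (lam := lam) ha2
  refine ⟨a, v - ps lam a - 1, ha, ⟨ha2, by omega⟩, ?_⟩
  rw [hRF a ha _ (by omega)]
  omega

lemma rowBound (hlam : IsPartitionOf m lam) (hT : IsSYT lam m T) {k : ℕ}
    (hRF : RowsFilled lam T k) (hk : k ≤ lam.length) {i j : ℕ}
    (h : InShape lam i j) (hv : T i j ≤ ps lam k) : i < k := by
  have hpos : 0 < T i j := hT.1.2.1 _ _ h
  obtain ⟨a, j', ha, hsh, hval⟩ := filled_cell hlam hRF hk hpos hv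
  have := cellUnique hT h hsh hval.symm
  omega

lemma filled_le (hlam : IsPartitionOf m lam) {k : ℕ} (hRF : RowsFilled lam T k)
    (hk : k ≤ lam.length) {i j : ℕ} (hi : i < k) (h : InShape lam i j) :
    T i j ≤ ps lam k := by
  rw [hRF i hi j (by exact h.2)]
  have h1 : ps lam (i + 1) = ps lam i + lam.getD i 0 := ps_succ (by omega)
  have h2 : ps lam (i + 1) ≤ ps lam k := ps_mono hlam (by omega)
  have := h.2
  omega

end SYT

section Step
variable {m : ℕ} {lam : List ℕ} {T : Filling}

lemma value_cell (hT : IsSYT lam m T) {v : ℕ} (hv1 : 1 ≤ v) (hv2 : v ≤ m) :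
    ∃ i j, InShape lam i j ∧ T i j = v := by
  obtain ⟨c, hc, -⟩ := hT.2.2 v hv1 hv2
  exact ⟨c.1, c.2, hc.1, hc.2⟩

lemma step (hlam : IsPartitionOf m lam) (hT : IsSYT lam m T) {k : ℕ}
    (hk : k < lam.length) (hRF : RowsFilled lam T k) :
    ∀ t, 1 ≤ t → t ≤ lam.getD k 0 →
    (∀ u, ps lam k < u → u < ps lam k + t → ¬ IsDescent lam T u) →
    T k (t - 1) = ps lam k + t := by
  have hps1 : ps lam (k + 1) = ps lam k + lam.getD k 0 := ps_succ hk
  have hpsm : ps lam (k + 1) ≤ m := ps_le_m hlam (k + 1)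
  intro t
  induction t with
  | zero => omega
  | succ t ih =>
    intro ht1 ht2 hnd
    -- the cell carrying the value `ps lam k + (t + 1)`
    have hvm : ps lam k + (t + 1) ≤ m := by omega
    obtain ⟨i, j, hsh, hval⟩ := value_cell hT (v := ps lam k + (t + 1)) (by omega) hvm
    have hsi : i < lam.length := hsh.1
    have hsj : j < lam.getD i 0 := hsh.2
    have hik : k ≤ i := by
      by_contra hik
      have := filled_le hlam hRF hk.le (by omega) hsh
      omega
    rcases Nat.eq_zero_or_pos t with rfl | ht0
    · -- base case: value ps lam k + 1 sits at (k, 0)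
      have hj0 : j = 0 := by
        by_contra hj
        have hsh' : InShape lam i (j - 1) := shape_mono hlam hsh le_rfl (by omega)
        have hlt : T i (j - 1) < T i j := row_strict hlam hT (by omega) hsh
        have : i < k := rowBound hlam hT hRF hk.le hsh' (by omega)
        omega
      subst hj0
      have hike : i = k := by
        by_contra hike
        have hi1 : i - 1 < lam.length := by omega
        have hsh' : InShape lam (i - 1) 0 := ⟨hi1, lam_pos hlam hi1⟩
        have hlt : T (i - 1) 0 < T i 0 := hT.1.2.2.2 (i - 1) i 0 (by omega) hsh
        have : i - 1 < k := rowBound hlam hT hRF hk.le hsh' (by omega)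
        omega
      rw [hike] at hval
      simpa using hval
    · -- inductive case
      have hprev : T k (t - 1) = ps lam k + t := by
        apply ih (by omega) (by omega)
        intro u hu1 hu2
        exact hnd u hu1 (by omega)
      have hshkt1 : InShape lam k (t - 1) := ⟨hk, by omega⟩
      have hike : i = k := by
        rcases lt_or_eq_of_le hik with hik' | hik'
        · exfalso
          apply hnd (ps lam k + t) (by omega) (by omega)
          exact ⟨k, t - 1, i, j, hshkt1, hsh, hprev, by omega, hik'⟩
        · omega
      rw [hike] at hsh hval hsj
      clear hik hsi
      have hjt : t ≤ j := by
        by_contra hjt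
        have := hT.1.2.2.1 k j (t - 1) (by omega) hshkt1
        omega
      have hje : j = t := by
        by_contra hje
        have hsh' : InShape lam k t := ⟨hk, by have := hsh.2; omega⟩
        have h1 : T k (t - 1) < T k t := row_strict hlam hT (by omega) hsh'
        have h2 : T k t < T k j := row_strict hlam hT (by omega) hsh
        omega
      subst hje
      simpa using hval

lemma step_row (hlam : IsPartitionOf m lam) (hT : IsSYT lam m T) {k : ℕ}
    (hk : k < lam.length) (hRF : RowsFilled lam T k)
    (hnd : ∀ u, ps lam k < u → u < ps lam (k + 1) → ¬ IsDescent lam T u) :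
    RowsFilled lam T (k + 1) := by
  intro i hi j hj
  rcases lt_or_eq_of_le (Nat.lt_succ_iff.1 hi) with hi' | rfl
  · exact hRF i hi' j hj
  · have hps1 : ps lam (i + 1) = ps lam i + lam.getD i 0 := ps_succ hk
    have := step hlam hT hk hRF (j + 1) (by omega) (by omega)
      (fun u h1 h2 => hnd u h1 (by omega))
    simp at this; omega

lemma climb (hlam : IsPartitionOf m lam) (hT : IsSYT lam m T) :
    ∀ k, k ≤ lam.length →
    (∀ a, a < k → ∀ u, ps lam a < u → u < ps lam (a + 1) → ¬ IsDescent lam T u) →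
    RowsFilled lam T k := by
  intro k
  induction k with
  | zero => intro _ _ i hi; omega
  | succ k ih =>
    intro hk hnd
    exact step_row hlam hT (by omega)
      (ih (by omega) fun a ha => hnd a (by omega))
      (hnd k (by omega))

end Step

section Descents
variable {m : ℕ} {lam : List ℕ} {T : Filling}

lemma rowsFilled_mono {k k' : ℕ} (h : RowsFilled lam T k) (hk : k' ≤ k) :
    RowsFilled lam T k' := fun i hi => h i (by omega)

lemma descent_at_ps (hlam : IsPartitionOf m lam) (hT : IsSYT lam m T) {k a : ℕ}
    (hRF : RowsFilled lam T k) (hk : k ≤ lam.length) (ha1 : 1 ≤ a) (ha2 : a ≤ k)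
    (ham : ps lam a < m) : IsDescent lam T (ps lam a) := by
  have ha3 : a - 1 < lam.length := by omega
  have hpos := lam_pos hlam ha3
  have hps : ps lam a = ps lam (a - 1) + lam.getD (a - 1) 0 := by
    have := ps_succ (lam := lam) ha3
    have : a - 1 + 1 = a := by omega
    rw [← this]
    exact ps_succ (lam := lam) ha3
  have hsh1 : InShape lam (a - 1) (lam.getD (a - 1) 0 - 1) := ⟨ha3, by omega⟩
  have hval1 : T (a - 1) (lam.getD (a - 1) 0 - 1) = ps lam a := by
    rw [hRF (a - 1) (by omega) _ (by omega)]
    omega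
  obtain ⟨i2, j2, hsh2, hval2⟩ := value_cell hT (v := ps lam a + 1) (by omega) (by omega)
  have hi2 : a ≤ i2 := by
    by_contra hi2
    have := filled_le hlam (rowsFilled_mono hRF ha2) (by omega) (by omega : i2 < a) hsh2
    omega
  exact ⟨a - 1, _, i2, j2, hsh1, hsh2, hval1, hval2, by omega⟩

lemma descent_is_ps (hlam : IsPartitionOf m lam) (hT : IsSYT lam m T) {k u : ℕ}
    (hRF : RowsFilled lam T k) (hk : k ≤ lam.length) (hd : IsDescent lam T u)
    (hu1 : 1 ≤ u) (hu2 : u ≤ ps lam k) :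
    ∃ a, 1 ≤ a ∧ a ≤ k ∧ u = ps lam a := by
  obtain ⟨i1, j1, i2, j2, hsh1, hsh2, hval1, hval2, hlt⟩ := hd
  obtain ⟨a, ha, hb1, hb2⟩ := exists_block hlam k hk u hu1 hu2
  have ha2 : a < lam.length := by omega
  have hps := ps_succ (lam := lam) ha2
  -- the cell of u is (a, u - ps lam a - 1)
  have hshu : InShape lam a (u - ps lam a - 1) := ⟨ha2, by omega⟩
  have hvalu : T a (u - ps lam a - 1) = u := by
    rw [hRF a ha _ (by omega)]; omega
  have he1 : i1 = a ∧ j1 = u - ps lam a - 1 :=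
    cellUnique hT hsh1 hshu (by rw [hval1, hvalu])
  rcases eq_or_lt_of_le hb2 with he | hlt2
  · exact ⟨a + 1, by omega, by omega, he⟩
  · exfalso
    have hshu2 : InShape lam a (u - ps lam a) := ⟨ha2, by omega⟩
    have hvalu2 : T a (u - ps lam a) = u + 1 := by
      rw [hRF a ha _ (by omega)]; omega
    have he2 : i2 = a ∧ j2 = u - ps lam a :=
      cellUnique hT hsh2 hshu2 (by rw [hval2, hvalu2])
    omega

lemma ps_pos (hlam : IsPartitionOf m lam) {a : ℕ} (ha : 1 ≤ a)
    (ha2 : a ≤ lam.length) : 1 ≤ ps lam a := by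
  have := ps_strictMonoOn hlam (a := 0) (b := a) (by omega) ha2
  rw [ps_zero] at this
  omega

lemma rowsFilled_descentList (hlam : IsPartitionOf m lam) (hT : IsSYT lam m T)
    (hm : 1 ≤ m) (hRF : RowsFilled lam T lam.length) :
    descentList lam m T = psList lam (lam.length - 1) := by
  have hlen := lam_length_pos hlam hm
  have hpsm := ps_length hlam
  obtain ⟨B, hB, hBlt⟩ := sort_split ((Finset.Ico 1 m).filter fun k => IsDescent lam T k)
    (psList lam (lam.length - 1)) m (psList_sorted hlam (by omega))
    (by
      intro x hx _
      rw [Finset.mem_filter, Finset.mem_Ico] at hx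
      obtain ⟨⟨hx1, hx2⟩, hx3⟩ := hx
      obtain ⟨a, ha1, ha2, rfl⟩ := descent_is_ps hlam hT hRF le_rfl hx3 hx1 (by omega)
      have : a ≠ lam.length := by
        rintro rfl; omega
      exact mem_psList.2 ⟨a - 1, by omega, by congr 1; omega⟩)
    (by
      intro x hx
      obtain ⟨t, ht, rfl⟩ := mem_psList.1 hx
      have h1 : 1 ≤ ps lam (t + 1) := ps_pos hlam (by omega) (by omega)
      have h2 : ps lam (t + 1) < m := ps_lt_m hlam (by omega)
      refine ⟨?_, by omega⟩
      rw [Finset.mem_filter, Finset.mem_Ico]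
      exact ⟨⟨h1, h2⟩, descent_at_ps hlam hT hRF le_rfl (by omega) (by omega) h2⟩)
  have hBnil : B = [] := by
    rw [List.eq_nil_iff_forall_not_mem]
    intro x hx
    have hx2 : x ∈ descentList lam m T := by
      rw [descentList, hB, List.mem_append]; exact Or.inr hx
    rw [descentList, Finset.mem_sort, Finset.mem_filter, Finset.mem_Ico] at hx2
    have := hBlt x hx
    omega
  rw [descentList, hB, hBnil, List.append_nil]

lemma rowsFilled_desComp (hlam : IsPartitionOf m lam) (hT : IsSYT lam m T)
    (hm : 1 ≤ m) (hRF : RowsFilled lam T lam.length) :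
    desComp lam m T = lam := by
  have hlen := lam_length_pos hlam hm
  have hpsm := ps_length hlam
  have hps := ps_succ (lam := lam) (k := lam.length - 1) (by omega)
  have hl1 : lam.length - 1 + 1 = lam.length := by omega
  rw [desComp_eq_gapsFrom lam m T (by omega), rowsFilled_descentList hlam hT hm hRF,
    ← List.append_nil (psList lam (lam.length - 1)),
    GF_split hlam (lam.length - 1) (by omega)]
  have : gapsFrom m (ps lam (lam.length - 1)) [] = [lam.getD (lam.length - 1) 0] := by
    rw [hl1] at hps
    simp only [gapsFrom]
    congr 1
    omega
  rw [this, ← take_succ_getD (by omega : lam.length - 1 < lam.length), hl1,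
    List.take_length]

end Descents

section Main
variable {m : ℕ} {lam : List ℕ} {T : Filling}

lemma main_dichotomy (hlam : IsPartitionOf m lam) (hT : IsSYT lam m T) (hm : 1 ≤ m) :
    (desComp lam m T = lam ∧ RowsFilled lam T lam.length) ∨
      lexLt (desComp lam m T) lam := by
  by_cases hbad : ∃ a, a < lam.length ∧
      ∃ u, ps lam a < u ∧ u < ps lam (a + 1) ∧ IsDescent lam T u
  · right
    obtain ⟨ha0len, hq⟩ := Nat.find_spec hbad
    set a0 := Nat.find hbad with ha0def
    have ha0min : ∀ a < a0, ¬ (a < lam.length ∧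
        ∃ u, ps lam a < u ∧ u < ps lam (a + 1) ∧ IsDescent lam T u) :=
      fun a ha => Nat.find_min hbad ha
    have hRF : RowsFilled lam T a0 := by
      apply climb hlam hT a0 (by omega)
      intro a ha u h1 h2 hdes
      exact ha0min a ha ⟨by omega, u, h1, h2, hdes⟩
    obtain ⟨hq1, hq2, hq3⟩ := Nat.find_spec hq
    set q0 := Nat.find hq with hq0def
    have hq0min : ∀ u < q0, ¬ (ps lam a0 < u ∧ u < ps lam (a0 + 1) ∧ IsDescent lam T u) :=
      fun u hu => Nat.find_min hq hu
    have hpsa1 : ps lam (a0 + 1) ≤ m := ps_le_m hlam _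
    have hmono : ps lam a0 < ps lam (a0 + 1) := ps_lt_succ hlam ha0len
    obtain ⟨B, hB, hBgt⟩ := sort_split ((Finset.Ico 1 m).filter fun k => IsDescent lam T k)
      (psList lam a0 ++ [q0]) q0
      (by
        rw [List.pairwise_append]
        refine ⟨psList_sorted hlam (by omega), by simp, ?_⟩
        intro x hx y hy
        simp only [List.mem_singleton] at hy
        subst hy
        obtain ⟨t, ht, rfl⟩ := mem_psList.1 hx
        have : ps lam (t + 1) ≤ ps lam a0 := ps_mono hlam (by omega)
        omega)
      (by
        intro x hx hxq
        rw [Finset.mem_filter, Finset.mem_Ico] at hx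
        obtain ⟨⟨hx1, hx2⟩, hx3⟩ := hx
        rw [List.mem_append]
        rcases le_or_gt x (ps lam a0) with h | h
        · obtain ⟨a, hA1, hA2, rfl⟩ := descent_is_ps hlam hT hRF (by omega) hx3 hx1 h
          exact Or.inl (mem_psList.2 ⟨a - 1, by omega, by congr 1; omega⟩)
        · rcases lt_or_eq_of_le hxq with h' | h'
          · exact absurd ⟨h, by omega, hx3⟩ (hq0min x h')
          · simp [h'])
      (by
        intro x hx
        rw [List.mem_append] at hx
        rcases hx with hx | hx
        · obtain ⟨t, ht, rfl⟩ := mem_psList.1 hx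
          have hle : ps lam (t + 1) ≤ ps lam a0 := ps_mono hlam (by omega)
          have h1 : 1 ≤ ps lam (t + 1) := ps_pos hlam (by omega) (by omega)
          refine ⟨?_, by omega⟩
          rw [Finset.mem_filter, Finset.mem_Ico]
          exact ⟨⟨h1, by omega⟩,
            descent_at_ps hlam hT hRF (by omega) (by omega) (by omega) (by omega)⟩
        · simp only [List.mem_singleton] at hx
          subst hx
          refine ⟨?_, le_rfl⟩
          rw [Finset.mem_filter, Finset.mem_Ico]
          exact ⟨⟨by omega, by omega⟩, hq3⟩)
    have hdl : descentList lam m T = psList lam a0 ++ (q0 :: B) := by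
      rw [descentList, hB, List.append_assoc]
      rfl
    rw [lexLt, desComp_eq_gapsFrom lam m T (by omega), hdl,
      GF_split hlam a0 (by omega)]
    have hlam_split : lam = lam.take a0 ++ (lam.getD a0 0 :: lam.drop (a0 + 1)) := by
      conv_lhs => rw [← List.take_append_drop a0 lam]
      congr 1
      rw [List.drop_eq_getElem_cons ha0len, List.getD_eq_getElem lam 0 ha0len]
    conv_rhs => rw [hlam_split]
    apply List.Lex.append_left
    have hps1 : ps lam (a0 + 1) = ps lam a0 + lam.getD a0 0 := ps_succ ha0len
    have : gapsFrom m (ps lam a0) (q0 :: B) = (q0 - ps lam a0) :: gapsFrom m q0 B := rfl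
    rw [this]
    exact List.Lex.rel (by omega)
  · left
    push_neg at hbad
    have hRF : RowsFilled lam T lam.length := by
      apply climb hlam hT _ le_rfl
      intro a ha u h1 h2 hdes
      exact absurd hdes (hbad a ha u h1 h2)
    exact ⟨rowsFilled_desComp hlam hT hm hRF, hRF⟩

lemma desComp_lexLe (hlam : IsPartitionOf m lam) (hT : IsSYT lam m T) (hm : 1 ≤ m) :
    lexLe (desComp lam m T) lam := by
  rcases main_dichotomy hlam hT hm with ⟨h, -⟩ | h
  · exact Or.inl h
  · exact Or.inr h

lemma desComp_eq_superT (hlam : IsPartitionOf m lam) (hT : IsSYT lam m T) (hm : 1 ≤ m)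
    (h : desComp lam m T = lam) : T = superT lam := by
  rcases main_dichotomy hlam hT hm with ⟨-, hRF⟩ | hlt
  · funext i j
    by_cases hsh : InShape lam i j
    · rw [hRF i hsh.1 j hsh.2, superT, if_pos hsh]
    · rw [hT.1.1 i j hsh, superT, if_neg hsh]
  · rw [lexLt, h] at hlt
    exact absurd hlt (irrefl_of (List.Lex (· < ·)) lam)

end Main

section Super
variable {m : ℕ} {lam : List ℕ}

lemma superT_rowsFilled (lam : List ℕ) : RowsFilled lam (superT lam) lam.length := by
  intro i hi j hj
  have h : InShape lam i j := ⟨hi, hj⟩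
  rw [superT, if_pos h]

lemma superT_isSYT (hlam : IsPartitionOf m lam) (hm : 1 ≤ m) :
    IsSYT lam m (superT lam) := by
  have hval : ∀ i j, InShape lam i j → superT lam i j = ps lam i + j + 1 := by
    intro i j h; rw [superT, if_pos h]
  refine ⟨⟨?_, ?_, ?_, ?_⟩, ?_, ?_⟩
  · intro i j h; rw [superT, if_neg h]
  · intro i j h; rw [hval i j h]; omega
  · intro i j1 j2 hj h2
    rw [hval i j2 h2, hval i j1 (shape_mono hlam h2 le_rfl hj)]
    omega
  · intro i1 i2 j h h2
    rw [hval i2 j h2, hval i1 j (shape_mono hlam h2 (by omega) le_rfl)]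
    have : ps lam i1 < ps lam i2 := ps_strictMonoOn hlam h h2.1.le
    omega
  · intro i j
    by_cases h : InShape lam i j
    · rw [hval i j h]
      have h1 : ps lam (i + 1) = ps lam i + lam.getD i 0 := ps_succ h.1
      have h2 : ps lam (i + 1) ≤ m := ps_le_m hlam _
      have := h.2
      omega
    · rw [superT, if_neg h]; omega
  · intro k hk1 hk2
    have hpsm : ps lam lam.length = m := ps_length hlam
    obtain ⟨a, ha, hb1, hb2⟩ := exists_block hlam lam.length le_rfl k hk1 (by omega)
    have hps := ps_succ (lam := lam) ha
    have hsh : InShape lam a (k - ps lam a - 1) := ⟨ha, by omega⟩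
    refine ⟨(a, k - ps lam a - 1), ⟨hsh, by rw [hval _ _ hsh]; omega⟩, ?_⟩
    rintro ⟨i, j⟩ ⟨hsh', hval'⟩
    dsimp only at hsh' hval'
    rw [hval _ _ hsh'] at hval'
    have hia : i = a := by
      by_contra hia
      rcases lt_or_gt_of_ne hia with h' | h'
      · have h1 : ps lam (i + 1) ≤ ps lam a := ps_mono hlam (by omega)
        have h2 : ps lam (i + 1) = ps lam i + lam.getD i 0 := ps_succ hsh'.1
        have := hsh'.2
        omega
      · have h1 : ps lam (a + 1) ≤ ps lam i := ps_mono hlam (by omega)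
        omega
    subst hia
    have : j = k - ps lam i - 1 := by omega
    subst this
    rfl

lemma superT_desComp (hlam : IsPartitionOf m lam) (hm : 1 ≤ m) :
    desComp lam m (superT lam) = lam :=
  rowsFilled_desComp hlam (superT_isSYT hlam hm) hm (superT_rowsFilled lam)

lemma count_superT (hlam : IsPartitionOf m lam) (hm : 1 ≤ m) :
    Nat.card {T : Filling // IsSYT lam m T ∧ desComp lam m T = lam} = 1 := by
  rw [Nat.card_eq_one_iff_unique]
  constructor
  · constructor
    intro ⟨T1, h1, h1'⟩ ⟨T2, h2, h2'⟩
    have e1 := desComp_eq_superT hlam h1 hm h1'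
    have e2 := desComp_eq_superT hlam h2 hm h2'
    exact Subtype.ext (e1.trans e2.symm)
  · exact ⟨⟨superT lam, superT_isSYT hlam hm, superT_desComp hlam hm⟩⟩

end Super

section Lex

lemma lexLt_trans {a b c : List ℕ} (h1 : lexLt a b) (h2 : lexLt b c) : lexLt a c :=
  List.lex_trans (fun h₁ h₂ => Nat.lt_trans h₁ h₂) h1 h2

lemma lexLt_irrefl (a : List ℕ) : ¬ lexLt a a :=
  _root_.irrefl_of (List.Lex (· < ·)) a

lemma lexLe_antisymm {a b : List ℕ} (h1 : lexLe a b) (h2 : lexLe b a) : a = b := by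
  rcases h1 with h1 | h1
  · exact h1
  · rcases h2 with h2 | h2
    · exact h2.symm
    · exact absurd (lexLt_trans h1 h2) (lexLt_irrefl a)

end Lex

lemma finite_partitions (m : ℕ) : Finite {l : List ℕ // IsPartitionOf m l} := by
  haveI : IsAntisymm ℕ (· ≥ ·) := ⟨fun a b h1 h2 => le_antisymm h2 h1⟩
  apply Finite.of_injective (β := Nat.Partition m)
    (fun l => ⟨(l.1 : Multiset ℕ), fun {i} hi => l.2.2.1 i hi, by simp [l.2.2.2]⟩)
  rintro ⟨l1, h1⟩ ⟨l2, h2⟩ he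
  simp only [Nat.Partition.mk.injEq, Multiset.coe_eq_coe] at he
  exact Subtype.ext (List.Perm.eq_of_pairwise' h1.1 h2.1 he)

/-- Let `c` assign a natural number to each partition of `m ≥ 1`, not identically zero, and
for each composition `a` of `m` let `d a = ∑_{lam ⊢ m} c(lam) · #{T ∈ SYT(lam) :
DesComp(T) = a}`. If `astar` is the lexicographically largest composition of `m` with
`d astar ≠ 0`, then `astar` is a partition, `d astar = c astar`, and
`d b ≥ c(astar) · #{T ∈ SYT(astar) : DesComp(T) = b}` for every composition `b` of `m`. -/
theorem lex_leading_term_is_partition (m : ℕ) (hm : 1 ≤ m) (c : List ℕ → ℕ)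
    (hc : ∃ lam, IsPartitionOf m lam ∧ c lam ≠ 0)
    (d : List ℕ → ℕ)
    (hd : ∀ a, d a = ∑ᶠ lam : {l : List ℕ // IsPartitionOf m l},
        c lam.val * Nat.card {T : Filling // IsSYT lam.val m T ∧ desComp lam.val m T = a})
    (astar : List ℕ) (ha1 : IsCompositionOf m astar) (ha2 : d astar ≠ 0)
    (ha3 : ∀ b, IsCompositionOf m b → d b ≠ 0 → lexLe b astar) :
    IsPartitionOf m astar ∧ d astar = c astar ∧
      ∀ b, IsCompositionOf m b →
        c astar * Nat.card {T : Filling // IsSYT astar m T ∧ desComp astar m T = b} ≤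
          d b := by
  haveI : Finite {l : List ℕ // IsPartitionOf m l} := finite_partitions m
  -- every partition with a nonzero coefficient is lexicographically at most astar
  have key1 : ∀ lam : {l : List ℕ // IsPartitionOf m l}, c lam.val ≠ 0 →
      lexLe lam.val astar := by
    intro lam hclam
    have hdlam : d lam.val ≠ 0 := by
      have hle : c lam.val *
          Nat.card {T : Filling // IsSYT lam.val m T ∧ desComp lam.val m T = lam.val} ≤
          d lam.val := by
        rw [hd]
        exact single_le_finsum (f := fun p : {l : List ℕ // IsPartitionOf m l} =>
          c p.val * Nat.card {T : Filling // IsSYT p.val m T ∧ desComp p.val m T = lam.val})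
          lam (Set.toFinite _) (fun j => Nat.zero_le _)
      rw [count_superT lam.2 hm] at hle
      omega
    exact ha3 lam.val ⟨lam.2.2.1, lam.2.2.2⟩ hdlam
  -- astar is one of the partitions with nonzero coefficient
  have hex : ∃ lam : {l : List ℕ // IsPartitionOf m l}, c lam.val ≠ 0 ∧
      Nat.card {T : Filling // IsSYT lam.val m T ∧ desComp lam.val m T = astar} ≠ 0 := by
    by_contra h
    push_neg at h
    apply ha2
    rw [hd]
    apply finsum_eq_zero_of_forall_eq_zero
    intro lam
    rcases Nat.eq_zero_or_pos (c lam.val) with h' | h'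
    · rw [h', zero_mul]
    · rw [h lam (by omega), mul_zero]
  obtain ⟨lam0, hc0, hcard0⟩ := hex
  have hne : Nonempty {T : Filling // IsSYT lam0.val m T ∧ desComp lam0.val m T = astar} :=
    (Nat.card_ne_zero.1 hcard0).1
  obtain ⟨T0, hT0, hdc0⟩ := hne
  have hle1 : lexLe astar lam0.val := hdc0 ▸ desComp_lexLe lam0.2 hT0 hm
  have hastar : astar = lam0.val := lexLe_antisymm hle1 (key1 lam0 hc0)
  have hpart : IsPartitionOf m astar := hastar ▸ lam0.2
  refine ⟨hpart, ?_, ?_⟩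
  · -- d astar = c astar
    have hterm : ∀ lam : {l : List ℕ // IsPartitionOf m l},
        lam ≠ ⟨astar, hpart⟩ →
        c lam.val * Nat.card {T : Filling // IsSYT lam.val m T ∧ desComp lam.val m T = astar}
          = 0 := by
      intro lam hneq
      rcases Nat.eq_zero_or_pos (c lam.val) with h' | h'
      · rw [h', zero_mul]
      · have hlt : lexLt lam.val astar := by
          rcases key1 lam (by omega) with he | hlt
          · exact absurd (Subtype.ext he) hneq
          · exact hlt
        haveI : IsEmpty {T : Filling // IsSYT lam.val m T ∧ desComp lam.val m T = astar} := by
          constructor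
          rintro ⟨T, hT, hdc⟩
          rcases hdc ▸ desComp_lexLe lam.2 hT hm with he | hlt2
          · rw [he] at hlt
            exact lexLt_irrefl _ hlt
          · exact lexLt_irrefl _ (lexLt_trans hlt2 hlt)
        rw [Nat.card_of_isEmpty, mul_zero]
    rw [hd astar, finsum_eq_single _ (⟨astar, hpart⟩ :
        {l : List ℕ // IsPartitionOf m l}) hterm, count_superT hpart hm, mul_one]
  · -- the inequality
    intro b hb
    rw [hd b]
    exact single_le_finsum (f := fun p : {l : List ℕ // IsPartitionOf m l} =>
        c p.val * Nat.card {T : Filling // IsSYT p.val m T ∧ desComp p.val m T = b})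
      (⟨astar, hpart⟩ : {l : List ℕ // IsPartitionOf m l})
      (Set.toFinite _) (fun j => Nat.zero_le _)

end QC
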